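/- With notation as above, there is a constant C > 0 such that for all (x,y,z) ∈ ℂ³ with x ≠ 0 or y ≠ 0, and all s = (s₁,s₂,s₃,s₄) ∈ ℂ⁴ with βs = 0 and α^†s = 0, one has |s₁| + |s₂| ≤ C · min{(|𝐱|+1)^{1/2}, (|𝐱|+1)/(|x|+|y|)} · ‖s‖_h, where ‖s‖_h² = (|s₁|²+|s₂|²)(|𝐱|²+1)^{-1/2} + |s₃|² + |s₄|². -/

import Mathlib

private lemma sq_le_imp {a b : ℝ} (ha : 0 ≤ a) (hb : 0 ≤ b) (h : a ^ 2 ≤ b ^ 2) : a ≤ b := by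
  calc a = Real.sqrt (a ^ 2) := (Real.sqrt_sq ha).symm
    _ ≤ Real.sqrt (b ^ 2) := Real.sqrt_le_sqrt h
    _ = b := Real.sqrt_sq hb

private lemma am2 {a b : ℝ} : (a + b) ^ 2 ≤ 2 * (a ^ 2 + b ^ 2) := by
  nlinarith [sq_nonneg (a - b)]

private lemma step1 {r a : ℝ} (hr : 0 ≤ r) (h : a ≤ r ^ 2 + 1) : a ≤ (r + 1) ^ 2 := by
  nlinarith

set_option maxHeartbeats 1000000

/-- there is `C > 0` so that every representing section (`βs = 0`, `α^†s = 0`,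
with `x ≠ 0` or `y ≠ 0`) satisfies
`|s₁| + |s₂| ≤ C · min{(|𝐱|+1)^{1/2}, (|𝐱|+1)/(|x|+|y|)} · ‖s‖_h`. -/
theorem section_component_bound_h :
    ∃ C : ℝ, 0 < C ∧ ∀ x y z s₁ s₂ s₃ s₄ : ℂ,
      (x ≠ 0 ∨ y ≠ 0) →
      (-y * s₁ + x * s₂ + z * s₄ = 0) →
      ((starRingEnd ℂ) x *
          ((Real.sqrt (‖x‖ ^ 2 + ‖y‖ ^ 2 + ‖z‖ ^ 2 + 1))⁻¹ : ℝ) * s₁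
        + (starRingEnd ℂ) y *
          ((Real.sqrt (‖x‖ ^ 2 + ‖y‖ ^ 2 + ‖z‖ ^ 2 + 1))⁻¹ : ℝ) * s₂
        + s₃ = 0) →
      ‖s₁‖ + ‖s₂‖ ≤
        C * min (Real.sqrt (Real.sqrt (‖x‖ ^ 2 + ‖y‖ ^ 2 + ‖z‖ ^ 2) + 1))
            ((Real.sqrt (‖x‖ ^ 2 + ‖y‖ ^ 2 + ‖z‖ ^ 2) + 1) /
              (‖x‖ + ‖y‖)) *
          Real.sqrt ((‖s₁‖ ^ 2 + ‖s₂‖ ^ 2) *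
              (Real.sqrt (‖x‖ ^ 2 + ‖y‖ ^ 2 + ‖z‖ ^ 2 + 1))⁻¹
            + ‖s₃‖ ^ 2 + ‖s₄‖ ^ 2) := by
  refine ⟨2, two_pos, ?_⟩
  intro x y z s₁ s₂ s₃ s₄ hxy hβ hα
  set r2 : ℝ := ‖x‖ ^ 2 + ‖y‖ ^ 2 + ‖z‖ ^ 2 with hr2def
  have hr2 : 0 ≤ r2 := by positivity
  set Q : ℝ := Real.sqrt (r2 + 1) with hQdef
  set r : ℝ := Real.sqrt r2 with hrdef
  have hQpos : 0 < Q := Real.sqrt_pos.mpr (by linarith)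
  have hQsq : Q ^ 2 = r2 + 1 := Real.sq_sqrt (by linarith)
  have hrsq : r ^ 2 = r2 := Real.sq_sqrt hr2
  have hrpos : 0 ≤ r := Real.sqrt_nonneg _
  have hQle : Q ≤ r + 1 := by
    have h1 : r2 + 1 ≤ (r + 1) ^ 2 := step1 hrpos (by rw [hrsq])
    calc Q = Real.sqrt (r2 + 1) := rfl
      _ ≤ Real.sqrt ((r + 1) ^ 2) := Real.sqrt_le_sqrt h1
      _ = r + 1 := Real.sqrt_sq (by linarith)
  set N : ℝ := Real.sqrt ((‖s₁‖ ^ 2 + ‖s₂‖ ^ 2) * Q⁻¹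
      + ‖s₃‖ ^ 2 + ‖s₄‖ ^ 2) with hNdef
  have hN0 : 0 ≤ N := Real.sqrt_nonneg _
  have hNsq : N ^ 2 = (‖s₁‖ ^ 2 + ‖s₂‖ ^ 2) * Q⁻¹
      + ‖s₃‖ ^ 2 + ‖s₄‖ ^ 2 := Real.sq_sqrt (by positivity)
  -- complex constraints
  have h2 : ((Q⁻¹ : ℝ) : ℂ) * (Q : ℂ) = 1 := by
    have h : (Q⁻¹ * Q : ℝ) = 1 := inv_mul_cancel₀ hQpos.ne'
    calc ((Q⁻¹ : ℝ) : ℂ) * (Q : ℂ) = ((Q⁻¹ * Q : ℝ) : ℂ) := by push_cast; ring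
      _ = 1 := by rw [h]; norm_num
  have eq1 : (starRingEnd ℂ) x * s₁ + (starRingEnd ℂ) y * s₂ = (Q : ℂ) * (-s₃) := by
    linear_combination (Q : ℂ) * hα - ((starRingEnd ℂ) x * s₁ + (starRingEnd ℂ) y * s₂) * h2
  have eq2 : -y * s₁ + x * s₂ = z * (-s₄) := by linear_combination hβ
  -- key identity
  have hiden : ‖(starRingEnd ℂ) x * s₁ + (starRingEnd ℂ) y * s₂‖ ^ 2
      + ‖-y * s₁ + x * s₂‖ ^ 2
      = (‖x‖ ^ 2 + ‖y‖ ^ 2) * (‖s₁‖ ^ 2 + ‖s₂‖ ^ 2) := by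
    simp only [Complex.sq_norm, Complex.normSq_apply, Complex.add_re, Complex.add_im,
      Complex.mul_re, Complex.mul_im, Complex.neg_re, Complex.neg_im, Complex.conj_re,
      Complex.conj_im]
    ring
  have h1abs : ‖(starRingEnd ℂ) x * s₁ + (starRingEnd ℂ) y * s₂‖
      = Q * ‖s₃‖ := by
    rw [eq1, norm_mul, Complex.norm_real, Real.norm_eq_abs, abs_of_pos hQpos, norm_neg]
  have h2abs : ‖-y * s₁ + x * s₂‖ = ‖z‖ * ‖s₄‖ := by
    rw [eq2, norm_mul, norm_neg]
  have hkey : (‖x‖ ^ 2 + ‖y‖ ^ 2)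
      * (‖s₁‖ ^ 2 + ‖s₂‖ ^ 2)
      = Q ^ 2 * ‖s₃‖ ^ 2 + ‖z‖ ^ 2 * ‖s₄‖ ^ 2 := by
    rw [← hiden, h1abs, h2abs]; ring
  -- positivity of |x|+|y|
  have hp : 0 < ‖x‖ + ‖y‖ := by
    rcases hxy with h | h
    · have := norm_pos_iff.mpr h
      have := norm_nonneg y
      linarith
    · have := norm_pos_iff.mpr h
      have := norm_nonneg x
      linarith
  -- abbreviations
  set a1 := ‖s₁‖
  set a2 := ‖s₂‖
  set a3 := ‖s₃‖
  set a4 := ‖s₄‖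
  have ha1 : 0 ≤ a1 := norm_nonneg _
  have ha2 : 0 ≤ a2 := norm_nonneg _
  have ha3 : 0 ≤ a3 := norm_nonneg _
  have ha4 : 0 ≤ a4 := norm_nonneg _
  -- S12 ≤ Q * N^2
  have hS12 : a1 ^ 2 + a2 ^ 2 ≤ Q * N ^ 2 := by
    have h1 : (a1 ^ 2 + a2 ^ 2) * Q⁻¹ ≤ N ^ 2 := by
      linarith [hNsq, sq_nonneg a3, sq_nonneg a4]
    have h2 : Q * ((a1 ^ 2 + a2 ^ 2) * Q⁻¹) = a1 ^ 2 + a2 ^ 2 := by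
      field_simp
    calc a1 ^ 2 + a2 ^ 2 = Q * ((a1 ^ 2 + a2 ^ 2) * Q⁻¹) := h2.symm
      _ ≤ Q * N ^ 2 := mul_le_mul_of_nonneg_left h1 hQpos.le
  -- |s₃|²+|s₄|² ≤ N²
  have h34 : a3 ^ 2 + a4 ^ 2 ≤ N ^ 2 := by
    have : 0 ≤ (a1 ^ 2 + a2 ^ 2) * Q⁻¹ := by positivity
    linarith [hNsq]
  -- bound A
  have hA : a1 + a2 ≤ 2 * Real.sqrt (r + 1) * N := by
    have hT : Real.sqrt (r + 1) ^ 2 = r + 1 := Real.sq_sqrt (by linarith)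
    apply sq_le_imp (by linarith) (by positivity)
    have hL2 : (a1 + a2) ^ 2 ≤ 2 * (a1 ^ 2 + a2 ^ 2) := am2
    have hQN : Q * N ^ 2 ≤ (r + 1) * N ^ 2 :=
      mul_le_mul_of_nonneg_right hQle (sq_nonneg N)
    have hrhs : (2 * Real.sqrt (r + 1) * N) ^ 2 = 4 * ((r + 1) * N ^ 2) := by
      rw [mul_pow, mul_pow, hT]; ring
    have hpos : 0 ≤ (r + 1) * N ^ 2 := by positivity
    linarith
  -- bound B
  have hB : a1 + a2 ≤ 2 * ((r + 1) / (‖x‖ + ‖y‖)) * N := by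
    have heq : 2 * ((r + 1) / (‖x‖ + ‖y‖)) * N
        = (2 * (r + 1) * N) / (‖x‖ + ‖y‖) := by ring
    rw [heq, le_div_iff₀ hp]
    apply sq_le_imp (by positivity) (by positivity)
    have hax : 0 ≤ ‖x‖ := norm_nonneg _
    have hay : 0 ≤ ‖y‖ := norm_nonneg _
    have hpq : (‖x‖ + ‖y‖) ^ 2
        ≤ 2 * (‖x‖ ^ 2 + ‖y‖ ^ 2) := am2
    have hz2 : ‖z‖ ^ 2 ≤ r ^ 2 + 1 := by
      rw [hrsq, hr2def]
      have := sq_nonneg (‖x‖)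
      have := sq_nonneg (‖y‖)
      linarith
    have hzr : ‖z‖ ^ 2 ≤ (r + 1) ^ 2 := step1 hrpos hz2
    have hQr : Q ^ 2 ≤ (r + 1) ^ 2 := step1 hrpos (by rw [hrsq]; exact le_of_eq hQsq)
    have hL2 : (a1 + a2) ^ 2 ≤ 2 * (a1 ^ 2 + a2 ^ 2) := am2
    have t1 : Q ^ 2 * a3 ^ 2 ≤ (r + 1) ^ 2 * a3 ^ 2 :=
      mul_le_mul_of_nonneg_right hQr (sq_nonneg a3)
    have t2 : ‖z‖ ^ 2 * a4 ^ 2 ≤ (r + 1) ^ 2 * a4 ^ 2 :=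
      mul_le_mul_of_nonneg_right hzr (sq_nonneg a4)
    have h1 : (‖x‖ ^ 2 + ‖y‖ ^ 2) * (a1 ^ 2 + a2 ^ 2)
        ≤ (r + 1) ^ 2 * (a3 ^ 2 + a4 ^ 2) := by
      rw [hkey]; linarith
    have hmain : (a1 ^ 2 + a2 ^ 2) * (‖x‖ ^ 2 + ‖y‖ ^ 2)
        ≤ (r + 1) ^ 2 * N ^ 2 := by
      rw [mul_comm]
      exact h1.trans (mul_le_mul_of_nonneg_left h34 (by positivity))
    calc ((a1 + a2) * (‖x‖ + ‖y‖)) ^ 2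
        = (a1 + a2) ^ 2 * (‖x‖ + ‖y‖) ^ 2 := by ring
      _ ≤ (2 * (a1 ^ 2 + a2 ^ 2)) * (2 * (‖x‖ ^ 2 + ‖y‖ ^ 2)) := by
          apply mul_le_mul hL2 hpq (by positivity) (by positivity)
      _ = 4 * ((a1 ^ 2 + a2 ^ 2) * (‖x‖ ^ 2 + ‖y‖ ^ 2)) := by ring
      _ ≤ 4 * ((r + 1) ^ 2 * N ^ 2) := by linarith
      _ = (2 * (r + 1) * N) ^ 2 := by ring
  rcases min_cases (Real.sqrt (r + 1)) ((r + 1) / (‖x‖ + ‖y‖)) with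
    ⟨hm, _⟩ | ⟨hm, _⟩ <;> rw [hm]
  · exact hA
  · exact hB
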